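/- Define α_s^> := inf { t > s : m(t) > 0 }. Then for each s, φ_a(s) → α_s^> as a → +∞: that is, for every ε > 0 there exists A such that for all a ≥ A, α_s^> < φ_a(s) ≤ α_s^> + ε (assuming α_s^> < +∞). -/

import Mathlib

open Set


set_option maxHeartbeats 1000000 in
lemma riccati_zero (p q m : ℝ → ℝ) (u u' : ℝ → ℝ) (a q₂ p₂ c l r : ℝ)
    (hplpos : ∀ t, 0 < p t) (hpu : ∀ t, p t ≤ p₂) (hq₂ : ∀ t, q t ≤ q₂)
    (hu : ∀ t, HasDerivAt u (u' t) t)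
    (hv : ∀ t, HasDerivAt (fun τ => p τ * u' τ) (q t * u t - a * m t * u t) t)
    (hlr : l < r) (hc : 0 < c)
    (hmc : ∀ t, l ≤ t → t ≤ r → c / 2 ≤ m t) (ha : 0 ≤ a)
    (hK : p₂ * Real.pi ^ 2 / (r - l) ^ 2 < a * c / 2 - q₂) :
    ∃ t, l ≤ t ∧ t ≤ r ∧ u t = 0 := by
  by_contra hcon
  push_neg at hcon
  have hp₂ : 0 < p₂ := lt_of_lt_of_le (hplpos 0) (hpu 0)
  have hrl : 0 < r - l := by linarith
  set K : ℝ := a * c / 2 - q₂ with hKdef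
  have hKpos : 0 < K := lt_trans (by positivity) hK
  set s0 : ℝ := Real.sqrt (K * p₂) with hs0def
  set κ : ℝ := Real.sqrt (K / p₂) with hκdef
  have hs0 : 0 < s0 := Real.sqrt_pos.mpr (by positivity)
  have hκpos : 0 < κ := Real.sqrt_pos.mpr (by positivity)
  have hs0sq : s0 ^ 2 = K * p₂ := Real.sq_sqrt (by positivity)
  have hκsq : κ ^ 2 = K / p₂ := Real.sq_sqrt (by positivity)
  have hs0eq : s0 = κ * p₂ := by
    have h1 : (κ * p₂) ^ 2 = K * p₂ := by rw [mul_pow, hκsq]; field_simp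
    nlinarith [hs0, mul_pos hκpos hp₂]
  have hucont : Continuous u := by
    rw [continuous_iff_continuousAt]; exact fun t => (hu t).continuousAt
  have hne : ∀ t, l ≤ t → t ≤ r → u t ≠ 0 := hcon
  set ρ : ℝ → ℝ := fun t => p t * u' t / u t with hρdef
  have hρd : ∀ t, u t ≠ 0 → HasDerivAt ρ ((q t - a * m t) - (ρ t) ^ 2 / p t) t := by
    intro t ht
    have h0 := (hv t).div (hu t) ht
    convert (show HasDerivAt ρ _ t from h0) using 1
    have hpt := (hplpos t).ne'
    simp only [hρdef]
    field_simp [hρdef]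
  set h : ℝ → ℝ := fun t => Real.arctan (ρ t / s0) with hhdef
  have hhd : ∀ t, u t ≠ 0 →
      HasDerivAt h ((1 / (1 + (ρ t / s0) ^ 2)) * (((q t - a * m t) - (ρ t) ^ 2 / p t) / s0)) t := by
    intro t ht
    exact (Real.hasDerivAt_arctan (ρ t / s0)).comp t ((hρd t ht).div_const s0)
  set g : ℝ → ℝ := fun t => h t + κ * t with hgdef
  have hgd : ∀ t, u t ≠ 0 →
      HasDerivAt g ((1 / (1 + (ρ t / s0) ^ 2)) * (((q t - a * m t) - (ρ t) ^ 2 / p t) / s0) + κ) t := by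
    intro t ht
    have hid : HasDerivAt (fun τ : ℝ => κ * τ) κ t := by
      simpa using (hasDerivAt_id t).const_mul κ
    exact (hhd t ht).add hid
  have hderiv_nonpos : ∀ t ∈ interior (Icc l r), deriv g t ≤ 0 := by
    intro t ht
    rw [interior_Icc] at ht
    have hne' : u t ≠ 0 := hne t ht.1.le ht.2.le
    rw [(hgd t hne').deriv]
    set x := ρ t with hx
    set D := (q t - a * m t) - x ^ 2 / p t with hD
    have hDle : D ≤ -(K + x ^ 2 / p₂) := by
      have h1 : q t ≤ q₂ := hq₂ t
      have h2 : a * (c / 2) ≤ a * m t := mul_le_mul_of_nonneg_left (hmc t ht.1.le ht.2.le) ha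
      have h3 : x ^ 2 / p₂ ≤ x ^ 2 / p t :=
        div_le_div_of_nonneg_left (by positivity) (hplpos t) (hpu t)
      have h4 : q t - a * m t ≤ -K := by rw [hKdef]; linarith
      rw [hD]; linarith
    have heq2 : -(K + x ^ 2 / p₂) * s0 = -κ * (s0 ^ 2 + x ^ 2) := by
      rw [hs0eq, mul_pow, hκsq]; field_simp
    have key : D * s0 ≤ -κ * (s0 ^ 2 + x ^ 2) := by
      rw [← heq2]
      exact mul_le_mul_of_nonneg_right hDle hs0.le
    have heq : (1 / (1 + (x / s0) ^ 2)) * (D / s0) = D * s0 / (s0 ^ 2 + x ^ 2) := by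
      field_simp
    have hfin : (1 / (1 + (x / s0) ^ 2)) * (D / s0) ≤ -κ := by
      rw [heq, div_le_iff₀ (by positivity)]
      linarith [key]
    linarith
  have hdiff : ∀ t ∈ Icc l r, DifferentiableAt ℝ g t := fun t ht =>
    (hgd t (hne t ht.1 ht.2)).differentiableAt
  have hanti : AntitoneOn g (Icc l r) := by
    apply antitoneOn_of_deriv_nonpos (convex_Icc l r)
    · exact fun t ht => (hdiff t ht).continuousAt.continuousWithinAt
    · intro t ht
      rw [interior_Icc] at ht
      exact (hdiff t (Ioo_subset_Icc_self ht)).differentiableWithinAt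
    · exact hderiv_nonpos
  have hglr : g r ≤ g l :=
    hanti (left_mem_Icc.mpr hlr.le) (right_mem_Icc.mpr hlr.le) hlr.le
  have hbl : h l < Real.pi / 2 := Real.arctan_lt_pi_div_two _
  have hbr : -(Real.pi / 2) < h r := Real.neg_pi_div_two_lt_arctan _
  have hκrl : κ * (r - l) < Real.pi := by
    have : h r + κ * r ≤ h l + κ * l := hglr
    nlinarith
  -- contradiction with hK
  have hc1 : κ ^ 2 * (r - l) ^ 2 < Real.pi ^ 2 := by
    have h0 : 0 ≤ κ * (r - l) := by positivity
    nlinarith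
  rw [hκsq] at hc1
  have : K * (r - l)^2 < Real.pi ^ 2 * p₂ := by
    rw [div_mul_eq_mul_div, div_lt_iff₀ hp₂] at hc1
    linarith
  rw [div_lt_iff₀ (by positivity)] at hK
  nlinarith


lemma pos_on_nonpos_m (p q m : ℝ → ℝ) (u u' : ℝ → ℝ) (a s T : ℝ)
    (hplpos : ∀ t, 0 < p t) (hqnn : ∀ t, 0 ≤ q t)
    (hu0 : u s = 0) (hu'0 : u' s = 1 / p s)
    (hu : ∀ t, HasDerivAt u (u' t) t)
    (hv : ∀ t, HasDerivAt (fun τ => p τ * u' τ) (q t * u t - a * m t * u t) t)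
    (ha : 0 ≤ a) (hsT : s < T) (hm0 : ∀ t, s < t → t < T → m t ≤ 0) :
    ∀ t, s < t → t ≤ T → 0 < u t := by
  set v : ℝ → ℝ := fun t => p t * u' t with hvdef
  have hvs : v s = 1 := by
    rw [hvdef]; simp only; rw [hu'0]; rw [mul_one_div]; exact div_self (hplpos s).ne'
  have hvcont : Continuous v := by
    rw [continuous_iff_continuousAt]; exact fun t => (hv t).continuousAt
  have hucont : Continuous u := by
    rw [continuous_iff_continuousAt]; exact fun t => (hu t).continuousAt
  have hu'eq : ∀ t, u' t = v t / p t := by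
    intro t; rw [hvdef]; exact (mul_div_cancel_left₀ _ (hplpos t).ne').symm
  -- v > 0 on [s, T]
  have hvpos : ∀ t ∈ Icc s T, 0 < v t := by
    by_contra hcc
    push_neg at hcc
    obtain ⟨t₀, ht₀, hvt₀⟩ := hcc
    set E : Set ℝ := Icc s T ∩ {t | v t ≤ 0} with hEdef
    have hEne : E.Nonempty := ⟨t₀, ht₀, hvt₀⟩
    have hEclosed : IsClosed E := isClosed_Icc.inter (isClosed_le hvcont continuous_const)
    have hEbdd : BddBelow E := ⟨s, fun t ht => ht.1.1⟩
    set c : ℝ := sInf E with hcdef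
    have hcE : c ∈ E := hEclosed.csInf_mem hEne hEbdd
    have hvc : v c ≤ 0 := hcE.2
    have hcs : s < c := by
      rcases lt_or_eq_of_le hcE.1.1 with h | h
      · exact h
      · exfalso; rw [← h] at hvc; rw [hvs] at hvc; linarith
    have hvposlt : ∀ t, s ≤ t → t < c → 0 < v t := by
      intro t h1 h2
      by_contra hh
      push_neg at hh
      have : t ∈ E := ⟨⟨h1, le_trans h2.le hcE.1.2⟩, hh⟩
      exact absurd (csInf_le hEbdd this) (not_le.mpr h2)
    -- u strictly increasing on [s, c]
    have husm : StrictMonoOn u (Icc s c) := by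
      apply strictMonoOn_of_deriv_pos (convex_Icc s c) (hucont.continuousOn)
      intro t ht
      rw [interior_Icc] at ht
      rw [(hu t).deriv, hu'eq]
      exact div_pos (hvposlt t ht.1.le ht.2) (hplpos t)
    have hunn : ∀ t ∈ Icc s c, 0 ≤ u t := by
      intro t ht
      rcases eq_or_lt_of_le ht.1 with h | h
      · rw [← h, hu0]
      · have := husm (left_mem_Icc.mpr (le_trans ht.1 ht.2)) ht h
        rw [hu0] at this; exact this.le
    -- v monotone on [s, c]
    have hvmono : MonotoneOn v (Icc s c) := by
      apply monotoneOn_of_deriv_nonneg (convex_Icc s c) (hvcont.continuousOn)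
      · intro t ht
        exact (hv t).differentiableAt.differentiableWithinAt
      · intro t ht
        rw [interior_Icc] at ht
        rw [(hv t).deriv]
        have h1 : 0 ≤ u t := hunn t (Ioo_subset_Icc_self ht)
        have h2 : m t ≤ 0 := hm0 t ht.1 (lt_of_lt_of_le ht.2 hcE.1.2)
        have h3 : 0 ≤ q t := hqnn t
        nlinarith [mul_nonneg (mul_nonneg ha (neg_nonneg.mpr h2)) h1, mul_nonneg h3 h1]
    have := hvmono (left_mem_Icc.mpr hcs.le) (right_mem_Icc.mpr hcs.le) hcs.le
    rw [hvs] at this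
    linarith
  -- conclude
  intro t hst htT
  have husm : StrictMonoOn u (Icc s T) := by
    apply strictMonoOn_of_deriv_pos (convex_Icc s T) (hucont.continuousOn)
    intro τ hτ
    rw [interior_Icc] at hτ
    rw [(hu τ).deriv, hu'eq]
    exact div_pos (hvpos τ (Ioo_subset_Icc_self hτ)) (hplpos τ)
  have := husm (left_mem_Icc.mpr hsT.le) ⟨le_of_lt hst, htT⟩ hst
  rwa [hu0] at this



/-- With `α_s^> := inf {t > s : m t > 0}` finite, the zero-function
satisfies `φ_a(s) → α_s^>` as `a → +∞`: for every `ε > 0` there is `A` such that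
`α_s^> < φ_a(s) ≤ α_s^> + ε` for all `a ≥ A`.  Here `u a` is the solution of
`-(p u')' + q u = a·m·u` with `u a s = 0`, `(u a)' s = 1/p s`. -/
theorem zero_function_tendsto_alpha
    (p q m : ℝ → ℝ) (u u' : ℝ → ℝ → ℝ) (s p₁ p₂ q₂ M : ℝ)
    (hp : Continuous p) (hq : Continuous q) (hm : Continuous m)
    (hp₁ : 0 < p₁) (hpl : ∀ t, p₁ ≤ p t) (hpu : ∀ t, p t ≤ p₂)
    (hqnn : ∀ t, 0 ≤ q t) (hq₂ : ∀ t, q t ≤ q₂)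
    (hmb : ∀ t, |m t| ≤ M)
    (hsol : ∀ a, u a s = 0 ∧ u' a s = 1 / p s ∧
      ∀ t, HasDerivAt (u a) (u' a t) t ∧
        HasDerivAt (fun τ => p τ * u' a τ) (q t * u a t - a * m t * u a t) t)
    (hα : {t | s < t ∧ 0 < m t}.Nonempty) :
    ∀ ε > 0, ∃ A : ℝ, ∀ a ≥ A,
      {t | s < t ∧ u a t = 0}.Nonempty ∧
      sInf {t | s < t ∧ 0 < m t} < sInf {t | s < t ∧ u a t = 0} ∧
      sInf {t | s < t ∧ u a t = 0} ≤ sInf {t | s < t ∧ 0 < m t} + ε := by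
  intro ε hε
  have hplpos : ∀ t, 0 < p t := fun t => lt_of_lt_of_le hp₁ (hpl t)
  set S : Set ℝ := {t | s < t ∧ 0 < m t} with hSdef
  set α : ℝ := sInf S with hαdef
  have hSbdd : BddBelow S := ⟨s, fun t ht => ht.1.le⟩
  have hαs : s ≤ α := le_csInf hα (fun t ht => ht.1.le)
  -- find t₀ ∈ S close to α
  obtain ⟨t₀, ht₀S, ht₀lt⟩ := exists_lt_of_csInf_lt hα (show α < α + ε / 2 by linarith)
  have hαt₀ : α ≤ t₀ := csInf_le hSbdd ht₀S
  set c : ℝ := m t₀ with hcdef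
  have hc : 0 < c := ht₀S.2
  obtain ⟨δ₀, hδ₀, hball⟩ := Metric.continuous_iff.mp hm t₀ (c / 2) (half_pos hc)
  set δ : ℝ := min δ₀ (min (t₀ - s) ε) / 2 with hδdef
  have hst₀ : s < t₀ := ht₀S.1
  have hδpos : 0 < δ := by
    apply half_pos; apply lt_min hδ₀; exact lt_min (by linarith) hε
  set l : ℝ := t₀ - δ with hldef
  set r : ℝ := t₀ + δ with hrdef
  have hδt₀s : δ < t₀ - s := by
    have h1 : min δ₀ (min (t₀ - s) ε) ≤ min (t₀ - s) ε := min_le_right _ _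
    have h2 : min (t₀ - s) ε ≤ t₀ - s := min_le_left _ _
    rw [hδdef]; linarith
  have hδε : δ ≤ ε / 2 := by
    have h1 : min δ₀ (min (t₀ - s) ε) ≤ min (t₀ - s) ε := min_le_right _ _
    have h2 : min (t₀ - s) ε ≤ ε := min_le_right _ _
    rw [hδdef]; linarith
  have hδδ₀ : δ < δ₀ := by
    have h1 : min δ₀ (min (t₀ - s) ε) ≤ δ₀ := min_le_left _ _
    rw [hδdef]; linarith
  have hsl : s < l := by rw [hldef]; linarith
  have hlr : l < r := by rw [hldef, hrdef]; linarith
  have hrα : r ≤ α + ε := by rw [hrdef]; linarith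
  have hmc : ∀ t, l ≤ t → t ≤ r → c / 2 ≤ m t := by
    intro t h1 h2
    have hd : dist t t₀ < δ₀ := by
      rw [Real.dist_eq, abs_lt]
      constructor <;> [skip; skip] <;> rw [hldef] at h1 <;> rw [hrdef] at h2 <;> linarith
    have := hball t hd
    rw [Real.dist_eq, abs_lt] at this
    linarith [this.1]
  have hrl2 : r - l = 2 * δ := by rw [hldef, hrdef]; ring
  set A : ℝ := max 0 ((2 / c) * (q₂ + p₂ * Real.pi ^ 2 / (r - l) ^ 2 + 1)) with hAdef
  refine ⟨A, fun a ha => ?_⟩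
  have ha0 : 0 ≤ a := le_trans (le_max_left _ _) ha
  have hK : p₂ * Real.pi ^ 2 / (r - l) ^ 2 < a * c / 2 - q₂ := by
    have h1 : (2 / c) * (q₂ + p₂ * Real.pi ^ 2 / (r - l) ^ 2 + 1) ≤ a :=
      le_trans (le_max_right _ _) ha
    rw [div_mul_eq_mul_div, div_le_iff₀ hc] at h1
    nlinarith
  obtain ⟨hu0, hu'0, hsols⟩ := hsol a
  have hud : ∀ t, HasDerivAt (u a) (u' a t) t := fun t => (hsols t).1
  have hvd : ∀ t, HasDerivAt (fun τ => p τ * u' a τ) (q t * u a t - a * m t * u a t) t :=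
    fun t => (hsols t).2
  have hucont : Continuous (u a) := by
    rw [continuous_iff_continuousAt]; exact fun t => (hud t).continuousAt
  obtain ⟨z, hz1, hz2, hz0⟩ :=
    riccati_zero p q m (u a) (u' a) a q₂ p₂ c l r hplpos hpu hq₂ hud hvd hlr hc hmc ha0 hK
  have hzs : s < z := lt_of_lt_of_le hsl hz1
  set Z : Set ℝ := {t | s < t ∧ u a t = 0} with hZdef
  have hZne : Z.Nonempty := ⟨z, hzs, hz0⟩
  have hZbdd : BddBelow Z := ⟨s, fun t ht => ht.1.le⟩
  -- positivity on an interval past α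
  have hγ : ∃ γ, α < γ ∧ ∀ t, s < t → t ≤ γ → 0 < u a t := by
    rcases eq_or_lt_of_le hαs with hcase | hcase
    · -- α = s : use the derivative at s
      have hder : HasDerivAt (u a) (1 / p s) s := hu'0 ▸ hud s
      have htend := hasDerivAt_iff_tendsto_slope.mp hder
      have hev : ∀ᶠ t in nhdsWithin s {s}ᶜ, 0 < slope (u a) s t :=
        htend.eventually (eventually_gt_nhds (by have := hplpos s; positivity))
      rw [eventually_nhdsWithin_iff] at hev
      obtain ⟨δ', hδ', H⟩ := Metric.eventually_nhds_iff.mp hev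
      refine ⟨s + δ' / 2, by rw [← hcase]; linarith, fun t h1 h2 => ?_⟩
      have hts : 0 < t - s := by linarith
      have hd : dist t s < δ' := by
        rw [Real.dist_eq, abs_lt]
        constructor <;> linarith
      have hsl : 0 < slope (u a) s t := H hd (by simp; linarith)
      rw [slope_def_field, hu0, sub_zero] at hsl
      have := mul_pos hsl hts
      rwa [div_mul_cancel₀ _ hts.ne'] at this
    · -- s < α : positivity up to α, then continuity past α
      have hm0 : ∀ t, s < t → t < α → m t ≤ 0 := by
        intro t h1 h2
        by_contra hh
        push_neg at hh
        exact absurd (csInf_le hSbdd ⟨h1, hh⟩) (not_le.mpr h2)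
      have posA := pos_on_nonpos_m p q m (u a) (u' a) a s α hplpos hqnn hu0 hu'0 hud hvd
        ha0 hcase hm0
      have hαpos : 0 < u a α := posA α hcase le_rfl
      have hev : ∀ᶠ t in nhds α, 0 < u a t :=
        (hucont.continuousAt).eventually (eventually_gt_nhds hαpos)
      obtain ⟨δ', hδ', H⟩ := Metric.eventually_nhds_iff.mp hev
      refine ⟨α + δ' / 2, by linarith, fun t h1 h2 => ?_⟩
      rcases le_or_gt t α with h | h
      · exact posA t h1 h
      · exact H (by rw [Real.dist_eq, abs_lt]; constructor <;> linarith)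
  obtain ⟨γ, hγα, hγpos⟩ := hγ
  have hγZ : ∀ b ∈ Z, γ ≤ b := by
    intro b hb
    by_contra hh
    push_neg at hh
    exact absurd hb.2 (hγpos b hb.1 hh.le).ne'
  refine ⟨hZne, lt_of_lt_of_le hγα (le_csInf hZne hγZ), ?_⟩
  exact le_trans (csInf_le hZbdd ⟨hzs, hz0⟩) (le_trans hz2 hrα)
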